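/- Suppose k₁ > 0 and k₂ < 0, and set q₀ = (2/π)·arctan(|b₂|/k₁). Then for every q with q₀ < q < 1 there exists an eigenvalue λ ∈ ℂ of J₀₂ with |arg λ| < qπ/2 (so the zero equilibrium state of the controlled type-2 fractional Stokes system is unstable for every order q ∈ (q₀, 1)). -/

import Mathlib

lemma abs_arctan' (x : ℝ) : |Real.arctan x| = Real.arctan |x| := by
  have mono := Real.arctan_strictMono.monotone
  have h0 : ∀ y : ℝ, 0 ≤ y → 0 ≤ Real.arctan y := fun y hy => by
    simpa [Real.arctan_zero] using mono hy
  rcases abs_cases x with ⟨h, hx⟩ | ⟨h, hx⟩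
  · rw [h, abs_of_nonneg (h0 x hx)]
  · rw [h, Real.arctan_neg, abs_of_nonpos]
    simpa [Real.arctan_zero] using mono (le_of_lt hx)

/-- If `k₁ > 0`, `k₂ < 0` and `q₀ = (2/π)·arctan(|b₂|/k₁)`, then for every
`q ∈ (q₀, 1)` there is an eigenvalue `λ` of `J₀₂` with `|arg λ| < qπ/2`. -/
theorem stmt_10 (b₂ k₁ k₂ : ℝ) (hb₂ : b₂ ≠ 0) (hk₁ : 0 < k₁) (hk₂ : k₂ < 0)
    (q₀ : ℝ) (hq₀ : q₀ = 2 / Real.pi * Real.arctan (|b₂| / k₁)) :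
    let J : Matrix (Fin 3) (Fin 3) ℂ :=
      Matrix.of ![![(k₁ : ℂ), 0, (b₂ : ℂ)], ![0, (k₂ : ℂ), 0], ![-(b₂ : ℂ), 0, (k₁ : ℂ)]]
    ∀ q : ℝ, q₀ < q → q < 1 → ∃ z : ℂ, (J - z • 1).det = 0 ∧
      |z.arg| < q * Real.pi / 2 := by
  intro J q hq hq1
  refine ⟨(k₁ : ℂ) + (b₂ : ℂ) * Complex.I, ?_, ?_⟩
  · simp only [J, Matrix.det_fin_three, Matrix.sub_apply, Matrix.smul_apply,
      Matrix.one_apply, Matrix.of_apply, Matrix.cons_val', Matrix.cons_val_zero,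
      Matrix.cons_val_one, Matrix.head_cons, Matrix.empty_val',
      Matrix.cons_val_fin_one, Matrix.head_fin_const, Matrix.cons_val]
    norm_num [Fin.ext_iff]
    ring_nf
    have h2 : Complex.I ^ 2 = -1 := Complex.I_sq
    have h3 : Complex.I ^ 3 = -Complex.I := by rw [pow_succ, h2]; ring
    rw [h2, h3]; ring
  · set z : ℂ := (k₁ : ℂ) + (b₂ : ℂ) * Complex.I with hz
    have hre : z.re = k₁ := by simp [hz]
    have him : z.im = b₂ := by simp [hz]
    have habs : |z.arg| < Real.pi / 2 := by
      rw [Complex.abs_arg_lt_pi_div_two_iff]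
      left; rw [hre]; exact hk₁
    have harg : z.arg = Real.arctan (b₂ / k₁) := by
      have := Complex.tan_arg z
      rw [hre, him] at this
      rw [← this, Real.arctan_tan (abs_lt.mp habs |>.1)
        (abs_lt.mp habs |>.2)]
    have hpi := Real.pi_pos
    have hA : Real.arctan (|b₂| / k₁) = q₀ * Real.pi / 2 := by
      rw [hq₀]; field_simp
    rw [harg, abs_arctan', abs_div, abs_of_pos hk₁, hA]
    have : q₀ * Real.pi < q * Real.pi := by nlinarith
    linarith
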